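/- Let B be a commutative ring with a nilpotent ideal 𝔟, set B̄ := B/𝔟, and let M be a B-module with Tor_i^B(B̄, M) = 0 for all i > 0. Given a free resolution ⋯ → P̄^{-1} → P̄^0 → B̄ ⊗_B M → 0 of the B̄-module B̄ ⊗_B M, with each P̄^{-i} a free B̄-module on a basis set Z_i, there exists a free resolution ⋯ → P^{-1} → P^0 → M → 0 of M by free B-modules with bases Z_i, such that applying B̄ ⊗_B − to it recovers the given resolution. -/

import Mathlib

open CategoryTheory

open scoped TensorProduct

open TensorProduct LinearMap CategoryTheory.Limits
universe u

section Basic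
variable {B : Type u} [CommRing B] (b : Ideal B)

theorem nilpotent_nakayama {M : Type u} [AddCommGroup M] [Module B M]
    (hnil : ∃ n : ℕ, b ^ n = ⊥) (N P : Submodule B M) (h : P ≤ N ⊔ b • P) : P ≤ N := by
  obtain ⟨n, hn⟩ := hnil
  have key : ∀ k : ℕ, P ≤ N ⊔ (b ^ k) • P := by
    intro k; induction k with
    | zero => rw [pow_zero, Ideal.one_eq_top, Submodule.top_smul]; exact le_sup_right
    | succ k ih =>
      refine h.trans (sup_le le_sup_left ?_)
      have : b • P ≤ b • (N ⊔ b ^ k • P) := smul_mono_right b ih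
      refine this.trans ?_
      rw [Submodule.smul_sup]
      refine sup_le ((Submodule.smul_le_right).trans le_sup_left) ?_
      rw [← Submodule.smul_assoc, Ideal.smul_eq_mul, ← pow_succ']
      exact le_sup_right
  have := key n
  rwa [hn, Submodule.bot_smul, sup_bot_eq] at this

theorem tmul_eq_zero_of_mem {M : Type u} [AddCommGroup M] [Module B M]
    (x : M) (hx : x ∈ (b • ⊤ : Submodule B M)) :
    (1 : B ⧸ b) ⊗ₜ[B] x = (0 : (B ⧸ b) ⊗[B] M) := by
  refine Submodule.smul_induction_on hx (fun c hc m _ => ?_) (fun x y hx hy => ?_)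
  · rw [tmul_smul, smul_tmul', ← Algebra.algebraMap_eq_smul_one, Ideal.Quotient.algebraMap_eq,
      Ideal.Quotient.eq_zero_iff_mem.2 hc, zero_tmul]
  · rw [tmul_add, hx, hy, add_zero]

theorem mem_of_tmul_eq_zero {M : Type u} [AddCommGroup M] [Module B M]
    (x : M) (h : (1 : B ⧸ b) ⊗ₜ[B] x = (0 : (B ⧸ b) ⊗[B] M)) :
    x ∈ (b • ⊤ : Submodule B M) := by
  have h2 := congrArg (quotTensorEquivQuotSMul M b) h
  rw [map_zero, show (1 : B ⧸ b) = Ideal.Quotient.mk b 1 from rfl,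
    quotTensorEquivQuotSMul_mk_tmul, one_smul] at h2
  exact (Submodule.Quotient.mk_eq_zero _).1 h2

theorem exists_tmul_eq {M : Type u} [AddCommGroup M] [Module B M]
    (t : (B ⧸ b) ⊗[B] M) : ∃ x : M, (1 : B ⧸ b) ⊗ₜ[B] x = t := by
  induction t with
  | zero => exact ⟨0, tmul_zero _ _⟩
  | tmul c m =>
    obtain ⟨r, rfl⟩ := Ideal.Quotient.mk_surjective c
    exact ⟨r • m, by rw [tmul_smul, smul_tmul', ← Algebra.algebraMap_eq_smul_one, Ideal.Quotient.algebraMap_eq]⟩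
  | add x y hx hy =>
    obtain ⟨a, rfl⟩ := hx; obtain ⟨c, rfl⟩ := hy
    exact ⟨a + c, tmul_add _ _ _⟩

theorem translate_exact {X Y W : Type u} [AddCommGroup X] [Module B X] [AddCommGroup Y]
    [Module B Y] [AddCommGroup W] [Module B W] (f : Y →ₗ[B] X) (g : W →ₗ[B] Y)
    (hfg : LinearMap.ker f = LinearMap.range g)
    (hT : LinearMap.ker (f.lTensor (B ⧸ b)) ≤ LinearMap.range (g.lTensor (B ⧸ b))) :
    LinearMap.range f ⊓ (b • ⊤ : Submodule B X) ≤ b • LinearMap.range f := by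
  rintro x ⟨⟨y, rfl⟩, hx2⟩
  have h1 : (f.lTensor (B ⧸ b)) ((1 : B ⧸ b) ⊗ₜ[B] y) = 0 := by
    rw [lTensor_tmul]; exact tmul_eq_zero_of_mem b _ hx2
  obtain ⟨t, ht⟩ := hT (mem_ker.2 h1)
  obtain ⟨w, rfl⟩ := exists_tmul_eq b t
  rw [lTensor_tmul] at ht
  have hz : (1 : B ⧸ b) ⊗ₜ[B] (y - g w) = 0 := by rw [tmul_sub, ht, sub_self]
  have hmem := mem_of_tmul_eq_zero b _ hz
  have hgw : f (g w) = 0 := by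
    have : g w ∈ LinearMap.ker f := hfg ▸ LinearMap.mem_range_self g w
    exact this
  have hfy : f y = f (y - g w) := by rw [map_sub, hgw, sub_zero]
  rw [hfy]
  have : f (y - g w) ∈ Submodule.map f (b • ⊤) := ⟨_, hmem, rfl⟩
  rwa [Submodule.map_smul'', Submodule.map_top] at this

variable (ι : Type u)

/-- reduction map on free modules -/
noncomputable def redMap : (ι →₀ B) →ₗ[B] (ι →₀ B ⧸ b) :=
  Finsupp.mapRange.linearMap (Algebra.linearMap B (B ⧸ b))

theorem redMap_single (z : ι) : redMap b ι (Finsupp.single z 1) = Finsupp.single z 1 := by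
  simp [redMap]

theorem redMap_surjective : Function.Surjective (redMap b ι) := by
  have : ⇑(redMap b ι) = Finsupp.mapRange (⇑(Algebra.linearMap B (B ⧸ b))) (map_zero _) := by
    ext v a; rw [redMap, Finsupp.mapRange.linearMap_apply]
  rw [this]
  exact Finsupp.mapRange_surjective _ (map_zero _) Ideal.Quotient.mk_surjective

theorem redMap_eq (v : ι →₀ B) :
    redMap b ι v = Finsupp.mapRange (⇑(Ideal.Quotient.mk b)) (map_zero _) v := by
  ext a
  rw [redMap, Finsupp.mapRange.linearMap_apply, Finsupp.mapRange_apply, Finsupp.mapRange_apply,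
    Algebra.linearMap_apply, Ideal.Quotient.algebraMap_eq]

theorem ker_redMap : LinearMap.ker (redMap b ι) = (b • ⊤ : Submodule B (ι →₀ B)) := by
  apply le_antisymm
  · intro v hv
    have hv' : ∀ a, v a ∈ b := by
      intro a
      have := congrFun (congrArg (⇑) (mem_ker.1 hv)) a
      rw [redMap, Finsupp.mapRange.linearMap_apply, Finsupp.mapRange_apply] at this
      simpa [Ideal.Quotient.eq_zero_iff_mem] using this
    rw [← Finsupp.sum_single v]
    refine Submodule.sum_mem _ (fun a _ => ?_)
    have : Finsupp.single a (v a) = (v a) • Finsupp.single a (1 : B) := by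
      rw [Finsupp.smul_single, smul_eq_mul, mul_one]
    rw [this]
    exact Submodule.smul_mem_smul (hv' a) trivial
  · intro v hv
    rw [mem_ker]
    refine Submodule.smul_induction_on hv (fun c hc u _ => ?_) (fun u w hu hw => by
      rw [map_add, hu, hw, add_zero])
    rw [map_smul]
    ext a
    rw [Finsupp.smul_apply, Algebra.smul_def, Ideal.Quotient.algebraMap_eq,
      Ideal.Quotient.eq_zero_iff_mem.2 hc, zero_mul]
    rfl

end Basic
section Master
variable {B : Type u} [CommRing B] (b : Ideal B)

variable (N : Type u) [AddCommGroup N] [Module B N]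
    (X : ℕ → Type u) [∀ n, AddCommGroup (X n)] [∀ n, Module B (X n)]
    (d : ∀ n, X (n + 1) →ₗ[B] X n) (e : X 0 →ₗ[B] N)

/-- The chain complex attached to the data of a resolution. -/
noncomputable def masterComplex (hx : ∀ n, LinearMap.ker (d n) = LinearMap.range (d (n + 1))) :
    ChainComplex (ModuleCat.{u} B) ℕ :=
  ChainComplex.of (fun n => ModuleCat.of B (X n)) (fun n => ModuleCat.ofHom (d n))
    (fun n => by
      ext x
      show d n (d (n + 1) x) = 0
      have : d (n + 1) x ∈ LinearMap.ker (d n) := by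
        rw [hx n]; exact LinearMap.mem_range_self _ x
      exact this)

variable (hsurj : Function.Surjective e)
    (h0 : LinearMap.ker e = LinearMap.range (d 0))
    (hx : ∀ n, LinearMap.ker (d n) = LinearMap.range (d (n + 1)))

theorem masterComplex_d (n : ℕ) :
    (masterComplex X d hx).d (n + 1) n = ModuleCat.ofHom (d n) :=
  ChainComplex.of_d (fun n => ModuleCat.of B (X n)) (fun n => ModuleCat.ofHom (d n)) n

theorem masterComplex_X (n : ℕ) : (masterComplex X d hx).X n = ModuleCat.of B (X n) := rfl

/-- augmentation -/
noncomputable def masterπ :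
    masterComplex X d hx ⟶ (ChainComplex.single₀ (ModuleCat.{u} B)).obj (ModuleCat.of B N) :=
  (ChainComplex.toSingle₀Equiv _ _).symm ⟨ModuleCat.ofHom e, by
    rw [masterComplex_d]
    ext x
    show e (d 0 x) = 0
    have : d 0 x ∈ LinearMap.ker e := by rw [h0]; exact LinearMap.mem_range_self _ x
    exact this⟩

theorem masterπ_f_zero : (masterπ N X d e h0 hx).f 0 = ModuleCat.ofHom e :=
  ChainComplex.toSingle₀Equiv_symm_apply_f_zero _ _

/-- The data as a projective resolution. -/
noncomputable def masterRes (hproj : ∀ n, Projective (ModuleCat.of B (X n))) :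
    ProjectiveResolution (ModuleCat.of B N) where
  complex := masterComplex X d hx
  projective n := hproj n
  π := masterπ N X d e h0 hx
  quasiIso := ⟨fun n => by
    cases n with
    | zero =>
      rw [ChainComplex.quasiIsoAt₀_iff, ShortComplex.quasiIso_iff_of_zeros']
      · constructor
        · rw [ShortComplex.moduleCat_exact_iff]
          intro x2 hx2
          have key := LinearMap.congr_fun (congrArg ModuleCat.Hom.hom (masterπ_f_zero N X d e h0 hx)) x2
          have hx2' : e x2 = 0 := key.symm.trans hx2
          have : (show X 0 from x2) ∈ LinearMap.range (d 0) := by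
            rw [← h0]; exact LinearMap.mem_ker.2 hx2'
          obtain ⟨y, hy⟩ := this
          refine ⟨y, ?_⟩
          show ((masterComplex X d hx).d 1 0).hom y = x2
          rw [masterComplex_d]
          exact hy
        · have h5 : ((HomologicalComplex.shortComplexFunctor' (ModuleCat B)
            (ComplexShape.down ℕ) 1 0 0).map (masterπ N X d e h0 hx)).τ₂
              = ModuleCat.ofHom e := masterπ_f_zero N X d e h0 hx
          rw [h5]
          exact (ModuleCat.epi_iff_surjective _).2 hsurj
      all_goals rfl
    | succ n =>
      rw [quasiIsoAt_iff_exactAt' _ (n + 1) (ChainComplex.exactAt_succ_single_obj _ _)]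
      rw [HomologicalComplex.exactAt_iff' _ (n + 2) (n + 1) n (by simp) (by simp)]
      rw [ShortComplex.moduleCat_exact_iff]
      intro x2 hx2
      have key := LinearMap.congr_fun (congrArg ModuleCat.Hom.hom (masterComplex_d X d hx n)) x2
      have hx2' : d n x2 = 0 := key.symm.trans hx2
      have : (show X (n + 1) from x2) ∈ LinearMap.range (d (n + 1)) := by
        rw [← hx n]; exact LinearMap.mem_ker.2 hx2'
      obtain ⟨y, hy⟩ := this
      refine ⟨y, ?_⟩
      show ((masterComplex X d hx).d (n + 2) (n + 1)).hom y = x2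
      rw [masterComplex_d]
      exact hy⟩

include e hsurj h0 hx in
theorem master (hproj : ∀ n, Projective (ModuleCat.of B (X n))) (m : ℕ) :
    Subsingleton (((Tor (ModuleCat.{u} B) (m + 1)).obj (ModuleCat.of B (B ⧸ b))).obj
        (ModuleCat.of B N)) ↔
      LinearMap.ker ((d m).lTensor (B ⧸ b)) = LinearMap.range ((d (m + 1)).lTensor (B ⧸ b)) := by
  classical
  set F := (MonoidalCategory.tensoringLeft (ModuleCat.{u} B)).obj (ModuleCat.of B (B ⧸ b)) with hF
  set P := masterRes N X d e hsurj h0 hx hproj with hP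
  set D := (F.mapHomologicalComplex (ComplexShape.down ℕ)).obj P.complex with hD
  have iso : (((Tor (ModuleCat.{u} B) (m + 1)).obj (ModuleCat.of B (B ⧸ b))).obj
      (ModuleCat.of B N)) ≅ D.homology (m + 1) := P.isoLeftDerivedObj F (m + 1)
  have step1 : Subsingleton (((Tor (ModuleCat.{u} B) (m + 1)).obj (ModuleCat.of B (B ⧸ b))).obj
      (ModuleCat.of B N)) ↔ IsZero (D.homology (m + 1)) := by
    constructor
    · intro h
      exact (ModuleCat.isZero_of_subsingleton _).of_iso iso.symm
    · intro h
      exact ModuleCat.subsingleton_of_isZero (h.of_iso iso)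
  rw [step1, ← HomologicalComplex.exactAt_iff_isZero_homology,
    HomologicalComplex.exactAt_iff' _ (m + 2) (m + 1) m (by simp) (by simp),
    ShortComplex.moduleCat_exact_iff_range_eq_ker]
  have hf : (D.sc' (m + 2) (m + 1) m).f = ModuleCat.ofHom ((d (m + 1)).lTensor (B ⧸ b)) := by
    show F.map (P.complex.d (m + 2) (m + 1)) = _
    rw [show P.complex.d (m + 2) (m + 1) = ModuleCat.ofHom (d (m + 1)) from
      masterComplex_d X d hx (m + 1)]
    rfl
  have hg : (D.sc' (m + 2) (m + 1) m).g = ModuleCat.ofHom ((d m).lTensor (B ⧸ b)) := by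
    show F.map (P.complex.d (m + 1) m) = _
    rw [show P.complex.d (m + 1) m = ModuleCat.ofHom (d m) from masterComplex_d X d hx m]
    rfl
  rw [hf, hg]
  constructor
  · intro h; exact h.symm
  · intro h; exact h.symm
end Master
section Shift
variable {B : Type u} [CommRing B] (b : Ideal B)

/-- canonical augmentation from the free module on a module -/
noncomputable def augm (W : ModuleCat.{u} B) : ((W : Type u) →₀ B) →ₗ[B] W :=
  Finsupp.linearCombination B _root_.id

theorem augm_surjective (W : ModuleCat.{u} B) : Function.Surjective (augm W) :=
  Finsupp.linearCombination_surjective B Function.surjective_id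

/-- iterated syzygies -/
noncomputable def syzSeq (K : ModuleCat.{u} B) : ℕ → ModuleCat.{u} B
  | 0 => K
  | n + 1 => ModuleCat.of B ↥(LinearMap.ker (augm (syzSeq K n)))

/-- canonical resolution modules -/
noncomputable abbrev crX (K : ModuleCat.{u} B) (n : ℕ) : Type u := (syzSeq K n : Type u) →₀ B

/-- canonical resolution differentials -/
noncomputable def crD (K : ModuleCat.{u} B) (n : ℕ) : crX K (n + 1) →ₗ[B] crX K n :=
  (LinearMap.ker (augm (syzSeq K n))).subtype ∘ₗ (augm (syzSeq K (n + 1)))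

theorem crD_ker (K : ModuleCat.{u} B) (n : ℕ) :
    LinearMap.ker (crD K n) = LinearMap.ker (augm (syzSeq K (n + 1))) := by
  rw [crD]; exact LinearMap.ker_comp_of_ker_eq_bot _ (Submodule.ker_subtype _)

theorem crD_range (K : ModuleCat.{u} B) (n : ℕ) :
    LinearMap.range (crD K n) = LinearMap.ker (augm (syzSeq K n)) := by
  rw [crD]; exact (LinearMap.range_comp_of_range_eq_top _
    (LinearMap.range_eq_top.2 (augm_surjective _))).trans (Submodule.range_subtype _)

theorem crD_exact (K : ModuleCat.{u} B) (n : ℕ) :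
    LinearMap.ker (crD K n) = LinearMap.range (crD K (n + 1)) := by
  rw [crD_ker, crD_range]

theorem cr_exact0 (K : ModuleCat.{u} B) :
    LinearMap.ker (augm K) = LinearMap.range (crD K 0) := by
  rw [crD_range]; rfl

theorem crX_projective (K : ModuleCat.{u} B) (n : ℕ) :
    Projective (ModuleCat.of B (crX K n)) :=
  ModuleCat.projective_of_free (M := ModuleCat.of B (crX K n)) Finsupp.basisSingleOne

variable {N : Type u} [AddCommGroup N] [Module B N] {P0 : Type u} [AddCommGroup P0]
  [Module B P0] (p : P0 →ₗ[B] N)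

/-- the kernel as an object -/
noncomputable abbrev kMod : ModuleCat.{u} B := ModuleCat.of B ↥(LinearMap.ker p)

/-- glued resolution modules -/
noncomputable def glX : ℕ → Type u
  | 0 => P0
  | n + 1 => crX (kMod p) n

noncomputable instance glX_acg : ∀ n, AddCommGroup (glX p n)
  | 0 => inferInstanceAs (AddCommGroup P0)
  | n + 1 => inferInstanceAs (AddCommGroup (crX (kMod p) n))

noncomputable instance glX_mod : ∀ n, Module B (glX p n)
  | 0 => inferInstanceAs (Module B P0)
  | n + 1 => inferInstanceAs (Module B (crX (kMod p) n))

/-- glued resolution differentials -/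
noncomputable def glD : ∀ n, glX p (n + 1) →ₗ[B] glX p n
  | 0 => (LinearMap.ker p).subtype ∘ₗ augm (kMod p)
  | n + 1 => crD (kMod p) n

theorem glD_zero_range : LinearMap.range (glD p 0) = LinearMap.ker p := by
  show LinearMap.range ((LinearMap.ker p).subtype ∘ₗ augm (kMod p)) = _
  rw [LinearMap.range_comp, LinearMap.range_eq_top.2 (augm_surjective _),
    Submodule.map_top, Submodule.range_subtype]

theorem glD_exact (n : ℕ) :
    LinearMap.ker (glD p n) = LinearMap.range (glD p (n + 1)) := by
  cases n with
  | zero =>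
    show LinearMap.ker ((LinearMap.ker p).subtype ∘ₗ augm (kMod p))
      = LinearMap.range (crD (kMod p) 0)
    rw [LinearMap.ker_comp, Submodule.ker_subtype, Submodule.comap_bot, crD_range]
    rfl
  | succ n =>
    show LinearMap.ker (crD (kMod p) n) = LinearMap.range (crD (kMod p) (n + 1))
    exact crD_exact _ n

theorem glD_h0 (hp : Function.Surjective p) :
    LinearMap.ker p = LinearMap.range (glD p 0) := (glD_zero_range p).symm

theorem glX_projective [Module.Free B P0] :
    ∀ n, Projective (ModuleCat.of B (glX p n))
  | 0 => ModuleCat.projective_of_free (M := ModuleCat.of B (glX p 0))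
      (Module.Free.chooseBasis B P0)
  | n + 1 => crX_projective (kMod p) n

theorem shift_b [Module.Free B P0] (hp : Function.Surjective p)
    (hT : ∀ i > 0, Subsingleton (((Tor (ModuleCat.{u} B) i).obj
      (ModuleCat.of B (B ⧸ b))).obj (ModuleCat.of B N))) :
    ∀ i > 0, Subsingleton (((Tor (ModuleCat.{u} B) i).obj (ModuleCat.of B (B ⧸ b))).obj
      (ModuleCat.of B ↥(LinearMap.ker p))) := by
  intro i hi
  obtain ⟨m, rfl⟩ : ∃ m, i = m + 1 := ⟨i - 1, (Nat.succ_pred_eq_of_pos hi).symm⟩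
  have h1 := master b (↥(LinearMap.ker p)) (crX (kMod p)) (crD (kMod p)) (augm (kMod p))
    (augm_surjective (kMod p)) (cr_exact0 (kMod p)) (crD_exact (kMod p))
    (crX_projective (kMod p)) m
  have h2 := master b N (glX p) (glD p) p hp (glD_h0 p hp) (glD_exact p)
    (glX_projective p) (m + 1)
  have h3 : LinearMap.ker ((crD (kMod p) m).lTensor (B ⧸ b))
      = LinearMap.range ((crD (kMod p) (m + 1)).lTensor (B ⧸ b)) :=
    h2.mp (hT (m + 2) (by omega))
  exact h1.mpr h3

theorem shift_a [Module.Free B P0] (hp : Function.Surjective p)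
    (hT : Subsingleton (((Tor (ModuleCat.{u} B) 1).obj
      (ModuleCat.of B (B ⧸ b))).obj (ModuleCat.of B N))) :
    LinearMap.ker p ⊓ (b • ⊤ : Submodule B P0) ≤ b • LinearMap.ker p := by
  have h2 := master b N (glX p) (glD p) p hp (glD_h0 p hp) (glD_exact p)
    (glX_projective p) 0
  have h3 := translate_exact b (glD p 0) (glD p 1) (glD_exact p 0) (le_of_eq (h2.mp hT))
  rwa [glD_zero_range p] at h3
end Shift
section Main
variable {B : Type u} [CommRing B] {b : Ideal B}
  {M : Type u} [AddCommGroup M] [Module B M]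
  {Z : ℕ → Type u}
  (dbar : ∀ i : ℕ, (Z (i + 1) →₀ (B ⧸ b)) →ₗ[B ⧸ b] (Z i →₀ (B ⧸ b)))
  (ebar : (Z 0 →₀ (B ⧸ b)) →ₗ[B ⧸ b] ((B ⧸ b) ⊗[B] M))

/-- the expected kernels downstairs -/
noncomputable def kerbar : ∀ n, Submodule (B ⧸ b) (Z n →₀ (B ⧸ b))
  | 0 => LinearMap.ker ebar
  | n + 1 => LinearMap.ker (dbar n)

theorem kerbar_eq (hex0 : LinearMap.ker ebar = LinearMap.range (dbar 0))
    (hex : ∀ i : ℕ, LinearMap.ker (dbar i) = LinearMap.range (dbar (i + 1))) (n : ℕ) :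
    kerbar dbar ebar n = LinearMap.range (dbar n) := by
  cases n with
  | zero => exact hex0
  | succ n => exact hex n

/-- invariant at stage `n` -/
structure GoodK (n : ℕ) (K : Submodule B (Z n →₀ B)) : Prop where
  hmap : Submodule.map (redMap b (Z n)) K = Submodule.restrictScalars B (kerbar dbar ebar n)
  hT : K ⊓ (b • ⊤ : Submodule B (Z n →₀ B)) ≤ b • K
  hGood : ∀ i > 0, Subsingleton (((Tor (ModuleCat.{u} B) i).obj
    (ModuleCat.of B (B ⧸ b))).obj (ModuleCat.of B ↥K))

theorem base (hnil : ∃ n : ℕ, b ^ n = ⊥)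
    (htor : ∀ i > 0, Subsingleton (((Tor (ModuleCat.{u} B) i).obj
      (ModuleCat.of B (B ⧸ b))).obj (ModuleCat.of B M)))
    (hsurj : Function.Surjective ebar)
    (hex0 : LinearMap.ker ebar = LinearMap.range (dbar 0)) :
    ∃ e : (Z 0 →₀ B) →ₗ[B] M, Function.Surjective e ∧
      (∀ z : Z 0, (1 : B ⧸ b) ⊗ₜ[B] e (Finsupp.single z 1) = ebar (Finsupp.single z 1)) ∧
      GoodK dbar ebar 0 (LinearMap.ker e) := by
  classical
  choose mfun hmfun using fun z : Z 0 => exists_tmul_eq b (ebar (Finsupp.single z 1))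
  set e : (Z 0 →₀ B) →ₗ[B] M := Finsupp.linearCombination B mfun with he
  have hsingle : ∀ z : Z 0, e (Finsupp.single z 1) = mfun z := by
    intro z; rw [he, Finsupp.linearCombination_single, one_smul]
  have hcomp : ∀ z : Z 0, (1 : B ⧸ b) ⊗ₜ[B] e (Finsupp.single z 1) = ebar (Finsupp.single z 1) := by
    intro z; rw [hsingle]; exact hmfun z
  -- compatibility on all elements
  have hall : ∀ v : Z 0 →₀ B, ebar (redMap b (Z 0) v) = (1 : B ⧸ b) ⊗ₜ[B] e v := by
    have : (ebar.restrictScalars B) ∘ₗ (redMap b (Z 0))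
        = ((TensorProduct.mk B (B ⧸ b) M) 1) ∘ₗ e := by
      refine Finsupp.lhom_ext' fun z => LinearMap.ext_ring ?_
      simp only [LinearMap.coe_comp, Function.comp_apply, Finsupp.lsingle_apply,
        LinearMap.coe_restrictScalars, TensorProduct.mk_apply]
      rw [redMap_single b (Z 0) z, hcomp z]
    intro v
    exact (LinearMap.congr_fun this v).symm.trans rfl |>.symm
  have hsurj_e : Function.Surjective e := by
    have hle : (⊤ : Submodule B M) ≤ LinearMap.range e ⊔ (b • ⊤ : Submodule B M) := by
      intro u _
      obtain ⟨vb, hvb⟩ := hsurj ((1 : B ⧸ b) ⊗ₜ[B] u)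
      obtain ⟨v, rfl⟩ := redMap_surjective b (Z 0) vb
      have hz : (1 : B ⧸ b) ⊗ₜ[B] (u - e v) = 0 := by
        rw [TensorProduct.tmul_sub, ← hall, hvb, sub_self]
      have hmem := mem_of_tmul_eq_zero b _ hz
      exact Submodule.mem_sup.2 ⟨e v, LinearMap.mem_range_self _ _, u - e v, hmem, by abel⟩
    have := nilpotent_nakayama b hnil (LinearMap.range e) ⊤
      (hle.trans (sup_le_sup_left (smul_mono_right b ?x) _))
    · rw [← LinearMap.range_eq_top]
      exact top_le_iff.1 this
    · exact le_top
  refine ⟨e, hsurj_e, hcomp, ?_, ?_, ?_⟩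
  · -- hmap
    apply le_antisymm
    · rintro _ ⟨x, hx, rfl⟩
      show redMap b (Z 0) x ∈ kerbar dbar ebar 0
      show redMap b (Z 0) x ∈ LinearMap.ker ebar
      rw [LinearMap.mem_ker, hall, LinearMap.mem_ker.1 hx, TensorProduct.tmul_zero]
    · intro y hy
      have hy' : ebar y = 0 := hy
      obtain ⟨v, rfl⟩ := redMap_surjective b (Z 0) y
      have h1 : (1 : B ⧸ b) ⊗ₜ[B] e v = 0 := by rw [← hall]; exact hy'
      have h2 : e v ∈ (b • ⊤ : Submodule B M) := mem_of_tmul_eq_zero b _ h1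
      have h3 : e v ∈ Submodule.map e (b • ⊤ : Submodule B (Z 0 →₀ B)) := by
        rw [Submodule.map_smul'', Submodule.map_top, LinearMap.range_eq_top.2 hsurj_e]
        exact h2
      obtain ⟨w, hw, hwe⟩ := h3
      refine ⟨v - w, ?_, ?_⟩
      · show v - w ∈ LinearMap.ker e
        rw [LinearMap.mem_ker, map_sub, hwe, sub_self]
      · rw [map_sub, show redMap b (Z 0) w = 0 from ?_, sub_zero]
        have : w ∈ LinearMap.ker (redMap b (Z 0)) := by rw [ker_redMap]; exact hw
        exact this
  · exact shift_a b e hsurj_e (htor 1 Nat.one_pos)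
  · exact shift_b b e hsurj_e htor

theorem step (hnil : ∃ n : ℕ, b ^ n = ⊥)
    (hex0 : LinearMap.ker ebar = LinearMap.range (dbar 0))
    (hex : ∀ i : ℕ, LinearMap.ker (dbar i) = LinearMap.range (dbar (i + 1)))
    (n : ℕ) (K : Submodule B (Z n →₀ B)) (hK : GoodK dbar ebar n K) :
    ∃ dn : (Z (n + 1) →₀ B) →ₗ[B] (Z n →₀ B),
      LinearMap.range dn = K ∧
      (∀ z : Z (n + 1),
        redMap b (Z n) (dn (Finsupp.single z 1)) = dbar n (Finsupp.single z 1)) ∧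
      GoodK dbar ebar (n + 1) (LinearMap.ker dn) := by
  classical
  have hchoose : ∀ z : Z (n + 1),
      dbar n (Finsupp.single z 1) ∈ Submodule.map (redMap b (Z n)) K := by
    intro z
    rw [hK.hmap]
    show dbar n (Finsupp.single z 1) ∈ kerbar dbar ebar n
    rw [kerbar_eq dbar ebar hex0 hex n]
    exact LinearMap.mem_range_self _ _
  choose kfun hkmem hkred using fun z => Submodule.mem_map.1 (hchoose z)
  set dn : (Z (n + 1) →₀ B) →ₗ[B] (Z n →₀ B) := Finsupp.linearCombination B kfun with hdn
  have hsingle : ∀ z : Z (n + 1), dn (Finsupp.single z 1) = kfun z := by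
    intro z; rw [hdn, Finsupp.linearCombination_single, one_smul]
  have hcompz : ∀ z : Z (n + 1),
      redMap b (Z n) (dn (Finsupp.single z 1)) = dbar n (Finsupp.single z 1) := by
    intro z; rw [hsingle]; exact hkred z
  have hall : ∀ v : Z (n + 1) →₀ B,
      redMap b (Z n) (dn v) = dbar n (redMap b (Z (n + 1)) v) := by
    have hc : (redMap b (Z n)) ∘ₗ dn
        = (((dbar n).restrictScalars B)) ∘ₗ (redMap b (Z (n + 1))) := by
      refine Finsupp.lhom_ext' fun z => LinearMap.ext_ring ?_
      simp only [LinearMap.coe_comp, Function.comp_apply, Finsupp.lsingle_apply,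
        LinearMap.coe_restrictScalars]
      rw [hcompz z, redMap_single b (Z (n + 1)) z]
    intro v
    exact LinearMap.congr_fun hc v
  have hrle : LinearMap.range dn ≤ K := by
    rw [hdn, Finsupp.range_linearCombination, Submodule.span_le]
    rintro _ ⟨z, rfl⟩
    exact hkmem z
  have hKle : K ≤ LinearMap.range dn ⊔ b • K := by
    intro x hx
    have h1 : redMap b (Z n) x ∈ kerbar dbar ebar n := by
      have : redMap b (Z n) x ∈ Submodule.map (redMap b (Z n)) K := ⟨x, hx, rfl⟩
      rwa [hK.hmap] at this
    rw [kerbar_eq dbar ebar hex0 hex n] at h1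
    obtain ⟨ybar, hybar⟩ := h1
    obtain ⟨y, rfl⟩ := redMap_surjective b (Z (n + 1)) ybar
    have h2 : redMap b (Z n) (x - dn y) = 0 := by
      rw [map_sub, hall, hybar, sub_self]
    have h3 : x - dn y ∈ (b • ⊤ : Submodule B (Z n →₀ B)) := by
      rw [← ker_redMap b (Z n)]
      exact h2
    have h4 : x - dn y ∈ K := sub_mem hx (hrle (LinearMap.mem_range_self _ _))
    have h5 : x - dn y ∈ b • K := hK.hT ⟨h4, h3⟩
    have : x = dn y + (x - dn y) := by abel
    rw [this]
    exact Submodule.add_mem_sup (LinearMap.mem_range_self _ _) h5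
  have hrange : LinearMap.range dn = K := by
    refine le_antisymm hrle ?_
    exact nilpotent_nakayama b hnil (LinearMap.range dn) K hKle
  -- the corestriction to K
  set p : (Z (n + 1) →₀ B) →ₗ[B] ↥K :=
    LinearMap.codRestrict K dn (fun v => hrange ▸ LinearMap.mem_range_self dn v) with hp
  have hpsurj : Function.Surjective p := by
    rintro ⟨x, hx⟩
    rw [← hrange] at hx
    obtain ⟨y, hy⟩ := hx
    exact ⟨y, Subtype.ext hy⟩
  have hkerp : LinearMap.ker p = LinearMap.ker dn := LinearMap.ker_codRestrict K dn _
  refine ⟨dn, hrange, hcompz, ?_, ?_, ?_⟩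
  · -- hmap at n+1
    apply le_antisymm
    · rintro _ ⟨x, hx, rfl⟩
      show dbar n (redMap b (Z (n + 1)) x) = 0
      rw [← hall, LinearMap.mem_ker.1 hx, map_zero]
    · intro ybar hybar
      have hybar' : dbar n ybar = 0 := hybar
      obtain ⟨y, rfl⟩ := redMap_surjective b (Z (n + 1)) ybar
      have h1 : redMap b (Z n) (dn y) = 0 := by rw [hall]; exact hybar'
      have h2 : dn y ∈ K ⊓ (b • ⊤ : Submodule B (Z n →₀ B)) := by
        refine ⟨hrle (LinearMap.mem_range_self _ _), ?_⟩
        rw [← ker_redMap b (Z n)]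
        exact h1
      have h3 : dn y ∈ b • LinearMap.range dn := by
        rw [hrange]; exact hK.hT h2
      have h4 : dn y ∈ Submodule.map dn (b • ⊤ : Submodule B (Z (n + 1) →₀ B)) := by
        rw [Submodule.map_smul'', Submodule.map_top]
        exact h3
      obtain ⟨w, hw, hwe⟩ := h4
      refine ⟨y - w, ?_, ?_⟩
      · show y - w ∈ LinearMap.ker dn
        rw [LinearMap.mem_ker, map_sub, hwe, sub_self]
      · rw [map_sub, show redMap b (Z (n + 1)) w = 0 from ?_, sub_zero]
        have : w ∈ LinearMap.ker (redMap b (Z (n + 1))) := by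
          rw [ker_redMap]; exact hw
        exact this
  · -- hT at n+1
    have := shift_a b p hpsurj (hK.hGood 1 Nat.one_pos)
    rwa [hkerp] at this
  · -- hGood at n+1
    have := shift_b b p hpsurj hK.hGood
    rw [hkerp] at this
    exact this
end Main

/-- Lifting of free resolutions along a nilpotent quotient: let `B` be a commutative ring,
`𝔟` a nilpotent ideal, `B̄ = B/𝔟`, and `M` a `B`-module with `Tor_i^B(B̄, M) = 0` for
`i > 0`. Given a free resolution `⋯ → P̄^{-1} → P̄^{0} → B̄ ⊗_B M → 0` of `B̄ ⊗_B M`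
over `B̄`, where `P̄^{-i}` is free on the set `Z i`, there is a free resolution
`⋯ → P^{-1} → P^{0} → M → 0` of `M` over `B` with `P^{-i}` free on `Z i`, which reduces
to the given one upon applying `B̄ ⊗_B -` (expressed on the basis elements). -/
theorem lift_free_resolution_nilpotent {B : Type u} [CommRing B] (b : Ideal B)
    (hnil : ∃ n : ℕ, b ^ n = ⊥)
    (M : Type u) [AddCommGroup M] [Module B M]
    (htor : ∀ i > 0, Subsingleton (((Tor (ModuleCat.{u} B) i).obj
      (ModuleCat.of B (B ⧸ b))).obj (ModuleCat.of B M)))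
    (Z : ℕ → Type u)
    (dbar : ∀ i : ℕ, (Z (i + 1) →₀ (B ⧸ b)) →ₗ[B ⧸ b] (Z i →₀ (B ⧸ b)))
    (ebar : (Z 0 →₀ (B ⧸ b)) →ₗ[B ⧸ b] ((B ⧸ b) ⊗[B] M))
    (hsurj : Function.Surjective ebar)
    (hex0 : LinearMap.ker ebar = LinearMap.range (dbar 0))
    (hex : ∀ i : ℕ, LinearMap.ker (dbar i) = LinearMap.range (dbar (i + 1))) :
    ∃ (d : ∀ i : ℕ, (Z (i + 1) →₀ B) →ₗ[B] (Z i →₀ B)) (e : (Z 0 →₀ B) →ₗ[B] M),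
      Function.Surjective e ∧
      LinearMap.ker e = LinearMap.range (d 0) ∧
      (∀ i : ℕ, LinearMap.ker (d i) = LinearMap.range (d (i + 1))) ∧
      (∀ (i : ℕ) (z : Z (i + 1)),
        Finsupp.mapRange (⇑(Ideal.Quotient.mk b)) (map_zero _)
          (d i (Finsupp.single z 1)) = dbar i (Finsupp.single z 1)) ∧
      (∀ z : Z 0, (1 : B ⧸ b) ⊗ₜ[B] e (Finsupp.single z 1) = ebar (Finsupp.single z 1)) := by
    classical
  obtain ⟨e, he1, he2, he3⟩ := base dbar ebar hnil htor hsurj hex0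
  choose dfun h1 h2 h3 using step dbar ebar hnil hex0 hex
  let seq : ∀ n : ℕ, Σ' K : Submodule B (Z n →₀ B), GoodK dbar ebar n K :=
    fun n => Nat.rec ⟨LinearMap.ker e, he3⟩
      (fun n s => ⟨LinearMap.ker (dfun n s.1 s.2), h3 n s.1 s.2⟩) n
  refine ⟨fun n => dfun n (seq n).1 (seq n).2, e, he1, ?_, ?_, ?_, he2⟩
  · exact (h1 0 (seq 0).1 (seq 0).2).symm
  · intro i
    exact (h1 (i + 1) (seq (i + 1)).1 (seq (i + 1)).2).symm
  · intro i z
    rw [← redMap_eq]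
    exact h2 i (seq i).1 (seq i).2 z
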